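/- The function f(x) = (sin x)^{-2} + 1 - x^{-2} - (π-x)^{-2} on (0,π) attains its minimum precisely at x = π/2, and the minimum value equals 2 - 8/π². -/

import Mathlib

open Set

section auxiliary
open Real

lemma my_sin_lb (x : ℝ) (hx : 0 ≤ x) : x - x ^ 3 / 6 ≤ Real.sin x := by
  have mono : MonotoneOn (fun y : ℝ => Real.sin y - y + y ^ 3 / 6) (Ici 0) := by
    apply monotoneOn_of_deriv_nonneg (convex_Ici 0)
    · exact (Real.continuous_sin.sub continuous_id |>.add
        ((continuous_pow 3).div_const 6)).continuousOn
    · intro y hy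
      exact (((Real.differentiable_sin y).sub (differentiable_id y)).add
        (((differentiable_pow 3) y).div_const 6)).differentiableWithinAt
    · intro y hy
      have h : HasDerivAt (fun y : ℝ => Real.sin y - y + y ^ 3 / 6)
          (Real.cos y - 1 + 3 * y ^ (3-1) / 6) y := by
        exact ((Real.hasDerivAt_sin y).sub (hasDerivAt_id y)).add
          ((hasDerivAt_pow 3 y).div_const 6)
      rw [h.deriv]
      nlinarith [Real.one_sub_sq_div_two_le_cos (x := y)]
  have h0 := mono (self_mem_Ici) hx hx
  simp at h0
  linarith

lemma my_cos_ub (x : ℝ) (hx : 0 ≤ x) : Real.cos x ≤ 1 - x ^ 2 / 2 + x ^ 4 / 24 := by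
  have mono : MonotoneOn (fun y : ℝ => 1 - y ^ 2 / 2 + y ^ 4 / 24 - Real.cos y) (Ici 0) := by
    apply monotoneOn_of_deriv_nonneg (convex_Ici 0)
    · exact ((continuous_const.sub ((continuous_pow 2).div_const 2)).add
        ((continuous_pow 4).div_const 24) |>.sub Real.continuous_cos).continuousOn
    · intro y hy
      exact (((differentiable_const _ y).sub (((differentiable_pow 2) y).div_const 2)).add
        (((differentiable_pow 4) y).div_const 24) |>.sub (Real.differentiable_cos y)).differentiableWithinAt
    · intro y hy
      simp only [interior_Ici, mem_Ioi] at hy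
      have h : HasDerivAt (fun y : ℝ => 1 - y ^ 2 / 2 + y ^ 4 / 24 - Real.cos y)
          (0 - 2 * y ^ (2-1) / 2 + 4 * y ^ (4-1) / 24 - (-Real.sin y)) y := by
        exact (((hasDerivAt_const y (1:ℝ)).sub ((hasDerivAt_pow 2 y).div_const 2)).add
          ((hasDerivAt_pow 4 y).div_const 24)).sub (Real.hasDerivAt_cos y)
      rw [h.deriv]
      have := my_sin_lb y hy.le
      nlinarith
  have h0 := mono (self_mem_Ici) hx hx
  simp at h0
  linarith

lemma my_sin_ub (x : ℝ) (hx : 0 ≤ x) : Real.sin x ≤ x - x ^ 3 / 6 + x ^ 5 / 120 := by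
  have mono : MonotoneOn (fun y : ℝ => y - y ^ 3 / 6 + y ^ 5 / 120 - Real.sin y) (Ici 0) := by
    apply monotoneOn_of_deriv_nonneg (convex_Ici 0)
    · exact ((continuous_id.sub ((continuous_pow 3).div_const 6)).add
        ((continuous_pow 5).div_const 120) |>.sub Real.continuous_sin).continuousOn
    · intro y hy
      exact (((differentiable_id y).sub (((differentiable_pow 3) y).div_const 6)).add
        (((differentiable_pow 5) y).div_const 120) |>.sub (Real.differentiable_sin y)).differentiableWithinAt
    · intro y hy
      simp only [interior_Ici, mem_Ioi] at hy
      have h : HasDerivAt (fun y : ℝ => y - y ^ 3 / 6 + y ^ 5 / 120 - Real.sin y)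
          (1 - 3 * y ^ (3-1) / 6 + 5 * y ^ (5-1) / 120 - Real.cos y) y := by
        exact (((hasDerivAt_id y).sub ((hasDerivAt_pow 3 y).div_const 6)).add
          ((hasDerivAt_pow 5 y).div_const 120)).sub (Real.hasDerivAt_sin y)
      rw [h.deriv]
      have := my_cos_ub y hy.le
      nlinarith
  have h0 := mono (self_mem_Ici) hx hx
  simp at h0
  linarith

lemma my_cos_lb (x : ℝ) (hx : 0 ≤ x) :
    1 - x ^ 2 / 2 + x ^ 4 / 24 - x ^ 6 / 720 ≤ Real.cos x := by
  have mono : MonotoneOn (fun y : ℝ =>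
      Real.cos y - (1 - y ^ 2 / 2 + y ^ 4 / 24 - y ^ 6 / 720)) (Ici 0) := by
    apply monotoneOn_of_deriv_nonneg (convex_Ici 0)
    · exact (Real.continuous_cos.sub (((continuous_const.sub ((continuous_pow 2).div_const 2)).add
        ((continuous_pow 4).div_const 24)).sub ((continuous_pow 6).div_const 720))).continuousOn
    · intro y hy
      exact ((Real.differentiable_cos y).sub ((((differentiable_const _ y).sub
        (((differentiable_pow 2) y).div_const 2)).add
        (((differentiable_pow 4) y).div_const 24)).sub
        (((differentiable_pow 6) y).div_const 720))).differentiableWithinAt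
    · intro y hy
      simp only [interior_Ici, mem_Ioi] at hy
      have h : HasDerivAt (fun y : ℝ => Real.cos y - (1 - y ^ 2 / 2 + y ^ 4 / 24 - y ^ 6 / 720))
          ((-Real.sin y) - (0 - 2 * y ^ (2-1) / 2 + 4 * y ^ (4-1) / 24 - 6 * y ^ (6-1) / 720)) y := by
        exact (Real.hasDerivAt_cos y).sub ((((hasDerivAt_const y (1:ℝ)).sub
          ((hasDerivAt_pow 2 y).div_const 2)).add
          ((hasDerivAt_pow 4 y).div_const 24)).sub ((hasDerivAt_pow 6 y).div_const 720))
      rw [h.deriv]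
      have := my_sin_ub y hy.le
      nlinarith
  have h0 := mono (self_mem_Ici) hx hx
  simp at h0
  linarith

-- polynomial fact, region A1 (c = 33/1000), u = x^2 ∈ (0, 81/100]
lemma polyA1 (u : ℝ) (h0 : 0 ≤ u) (h1 : u ≤ 81/100) :
    0 ≤ (1 - u/2 + u^2/24 - u^3/720) -
      (1 - u^2/15 - (33/1000)*u^3) * (1 - u/6 + u^2/120)^3 := by
  have hp1 : (0:ℝ) ≤ 607/54000 - 733/72000*u := by linarith
  have hp2 : (0:ℝ) ≤ 17791/6480000 - 3181/8640000*u := by linarith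
  have hp3 : (0:ℝ) ≤ 1187/43200000 - 287/259200000*u := by linarith
  nlinarith [mul_nonneg (pow_nonneg h0 3) hp1, mul_nonneg (pow_nonneg h0 5) hp2,
    mul_nonneg (pow_nonneg h0 7) hp3, mul_nonneg (pow_nonneg h0 9) (by norm_num : (0:ℝ) ≤ 11/576000000)]

-- polynomial fact, region A2 (c = 31/1000), u = x^2 ∈ (0, 1]
lemma polyA2 (u : ℝ) (h0 : 0 ≤ u) (h1 : u ≤ 1) :
    0 ≤ (1 - u/2 + u^2/24 - u^3/720) -
      (1 - u^2/15 - (31/1000)*u^3) * (1 - u/6 + u^2/120)^3 := by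
  have hp1 : (0:ℝ) ≤ 499/54000 - 661/72000*u := by linarith
  have hp2 : (0:ℝ) ≤ 16387/6480000 - 2957/8640000*u := by linarith
  have hp3 : (0:ℝ) ≤ 1109/43200000 - 269/259200000*u := by linarith
  nlinarith [mul_nonneg (pow_nonneg h0 3) hp1, mul_nonneg (pow_nonneg h0 5) hp2,
    mul_nonneg (pow_nonneg h0 7) hp3, mul_nonneg (pow_nonneg h0 9) (by norm_num : (0:ℝ) ≤ 31/1728000000)]

-- polynomial fact, case B, u = t^2 ∈ (0, 33/100]
lemma polyB (u : ℝ) (h0 : 0 ≤ u) (h1 : u ≤ 33/100) :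
    2*(7402220/1000000 + u)*(1 - u/2 + u^2/24)^3 < (1 - u/6)*(2467401/1000000 - u)^3 := by
  have hp0 : (0:ℝ) < 217264318219682201/1000000000000000000 - 1122320941545894067/2000000000000000000*u := by
    linarith
  have hp1 : (0:ℝ) ≤ 984703694801/2000000000000 - 565181/2000000*u := by linarith
  have hp2 : (0:ℝ) ≤ 609223/4800000 - 109963/3200000*u := by linarith
  have hp3 : (0:ℝ) ≤ 1429889/345600000 - 1/6912*u := by linarith
  nlinarith [mul_nonneg (pow_nonneg h0 2) hp1, mul_nonneg (pow_nonneg h0 4) hp2,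
    mul_nonneg (pow_nonneg h0 6) hp3]



lemma cds_lb (x c : ℝ) (hx0 : 0 < x) (hxpi : x < Real.pi)
    (hH : 0 ≤ (1 - x^2/2 + (x^2)^2/24 - (x^2)^3/720) -
      (1 - (x^2)^2/15 - c*(x^2)^3) * (1 - x^2/6 + (x^2)^2/120)^3)
    (hM : 0 < 1 - (x^2)^2/15 - c*(x^2)^3) :
    1/x^3 - x/15 - c*x^3 ≤ Real.cos x / Real.sin x^3 := by
  have hsin0 : 0 < Real.sin x := Real.sin_pos_of_pos_of_lt_pi hx0 hxpi
  have hs : Real.sin x ≤ x * (1 - x^2/6 + (x^2)^2/120) := by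
    have := my_sin_ub x hx0.le; nlinarith
  have hc : 1 - x^2/2 + (x^2)^2/24 - (x^2)^3/720 ≤ Real.cos x := by
    have := my_cos_lb x hx0.le; nlinarith
  have hx3 : (0:ℝ) < x^3 := pow_pos hx0 3
  have h1 : Real.sin x ^ 3 ≤ (x * (1 - x^2/6 + (x^2)^2/120))^3 :=
    pow_le_pow_left₀ hsin0.le hs 3
  have h2 : (1 - (x^2)^2/15 - c*(x^2)^3) * Real.sin x^3 ≤ Real.cos x * x^3 := by
    calc (1 - (x^2)^2/15 - c*(x^2)^3) * Real.sin x^3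
        ≤ (1 - (x^2)^2/15 - c*(x^2)^3) * (x * (1 - x^2/6 + (x^2)^2/120))^3 :=
          mul_le_mul_of_nonneg_left h1 hM.le
      _ ≤ Real.cos x * x^3 := by nlinarith [mul_nonneg hx3.le hH]
  have e : 1/x^3 - x/15 - c*x^3 = (1 - (x^2)^2/15 - c*(x^2)^3) / x^3 := by
    field_simp
  rw [e, div_le_div_iff₀ hx3 (pow_pos hsin0 3)]
  nlinarith [h2]

lemma numA1 (x : ℝ) (hx0 : 0 < x) (hx : x ≤ 9/10) :
    x/15 + (33/1000)*x^3 < 1/(Real.pi - x)^3 := by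
  have hπl := Real.pi_gt_d6
  have hπu := Real.pi_lt_d6
  have hpx : (0:ℝ) < Real.pi - x := by linarith
  rw [lt_div_iff₀ (pow_pos hpx 3)]
  have h3 : x^3*(Real.pi-x)^3 ≤ (81/100)*(x*(Real.pi-x)^3) := by
    have : (0:ℝ) ≤ (x*(9/10 - x))*((x + 9/10)*(Real.pi-x)^3) := by
      apply mul_nonneg (mul_nonneg hx0.le (by linarith))
      exact mul_nonneg (by linarith) (pow_nonneg hpx.le 3)
    nlinarith [this]
  have hq : (0:ℝ) ≤ 16*x^2 - 40*Real.pi*x + 27*Real.pi^2 := by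
    nlinarith [sq_nonneg (4*x - 5*Real.pi), sq_nonneg Real.pi]
  have h2 : 256*(x*(Real.pi-x)^3) ≤ 27*Real.pi^4 := by
    nlinarith [mul_nonneg (sq_nonneg (4*x - Real.pi)) hq]
  have hsq : Real.pi^2 ≤ 9869607/1000000 := by nlinarith
  have hp4 : Real.pi^4 ≤ 9741/100 := by nlinarith [sq_nonneg Real.pi]
  nlinarith [h3, h2, hp4, mul_pos hx0 (pow_pos hpx 3)]

lemma numA2 (x : ℝ) (hx0 : 9/10 ≤ x) (hx : x ≤ 1) :
    x/15 + (31/1000)*x^3 < 1/(Real.pi - x)^3 := by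
  have hπl := Real.pi_gt_d6
  have hπu := Real.pi_lt_d6
  have hpx : (0:ℝ) < Real.pi - x := by linarith
  rw [lt_div_iff₀ (pow_pos hpx 3)]
  have h3 : x^3*(Real.pi-x)^3 ≤ x*(Real.pi-x)^3 := by
    have : (0:ℝ) ≤ (x*(1 - x))*((x + 1)*(Real.pi-x)^3) := by
      apply mul_nonneg (mul_nonneg (by linarith) (by linarith))
      exact mul_nonneg (by linarith) (pow_nonneg hpx.le 3)
    nlinarith [this]
  have h2 : x*(Real.pi-x)^3 ≤ (9/10)*(Real.pi-9/10)^3 := by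
    have t1 : (0:ℝ) ≤ (x-9/10) * ((Real.pi-9/10)^2*(18/5-Real.pi)) := by
      apply mul_nonneg (by linarith)
      exact mul_nonneg (sq_nonneg _) (by linarith)
    have t2 : (0:ℝ) ≤ (x-9/10)^2 * ((Real.pi-9/10)*(3*Real.pi-27/5) - (3*Real.pi - 18/5)/10) := by
      apply mul_nonneg (sq_nonneg _); nlinarith
    have t3 : (0:ℝ) ≤ (3*Real.pi-18/5) * ((x-9/10)^2 * (1-x)) := by
      apply mul_nonneg (by linarith)
      exact mul_nonneg (sq_nonneg _) (by linarith)
    nlinarith [t1, t2, t3, pow_nonneg (by linarith : (0:ℝ) ≤ x - 9/10) 4]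
  have hcube : (Real.pi - 9/10)^3 ≤ 1126407/100000 := by nlinarith [sq_nonneg (Real.pi - 9/10)]
  nlinarith [h3, h2, hcube]

set_option maxHeartbeats 1000000 in
lemma caseB (x : ℝ) (hx1 : 1 ≤ x) (hx : x < Real.pi/2) :
    1/x^3 < Real.cos x / Real.sin x^3 + 1/(Real.pi - x)^3 := by
  have hπl := Real.pi_gt_d6
  have hπu := Real.pi_lt_d6
  have hx0 : (0:ℝ) < x := by linarith
  set t := Real.pi/2 - x with htdef
  have ht0 : 0 < t := by rw [htdef]; linarith
  have ht1 : t ≤ 3/5 := by rw [htdef]; linarith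
  have hu : t^2 ≤ 33/100 := by nlinarith [Real.pi_lt_d6]
  have hcx : Real.cos x = Real.sin t := (Real.sin_pi_div_two_sub x).symm
  have hsx : Real.sin x = Real.cos t := (Real.cos_pi_div_two_sub x).symm
  have hpix : Real.pi - x = Real.pi/2 + t := by rw [htdef]; ring
  have hsin0 : 0 < Real.sin x :=
    Real.sin_pos_of_pos_of_lt_pi hx0 (by linarith)
  have hsint_lb : t - t^3/6 ≤ Real.sin t := my_sin_lb t ht0.le
  have hsint0 : 0 < Real.sin t := by nlinarith [hsint_lb]
  have hcost : 0 < Real.cos t := hsx ▸ hsin0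
  have hcost_ub : Real.cos t ≤ 1 - t^2/2 + (t^2)^2/24 := by
    have := my_cos_ub t ht0.le; nlinarith
  have hπl7 : (31415926/10000000 : ℝ) < Real.pi := by
    have := Real.pi_gt_d20; norm_num at this ⊢; linarith
  have hA : (2467401/1000000 : ℝ) ≤ Real.pi^2/4 := by
    nlinarith [sq_nonneg (Real.pi - 31415926/10000000)]
  have hB : Real.pi^2*3/4 ≤ 7402220/1000000 := by
    nlinarith [mul_pos (by linarith : (0:ℝ) < 3141593/1000000 - Real.pi)
      (by linarith : (0:ℝ) < Real.pi)]
  have hq0 : (0:ℝ) ≤ 1 - t^2/2 + (t^2)^2/24 := by nlinarith [sq_nonneg t, sq_nonneg (t^2)]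
  have hxpi0 : (0:ℝ) < Real.pi - x := by linarith
  -- main inequality in multiplied-out form
  have main : ((Real.pi-x)^3 - x^3) * Real.sin x^3 < Real.cos x * (x^3*(Real.pi-x)^3) := by
    have e4 : x = Real.pi/2 - t := by rw [htdef]; ring
    rw [hcx, hsx, hpix, e4]
    have e1 : ((Real.pi/2 + t)^3 - (Real.pi/2-t)^3) * Real.cos t^3
        = (2*t*(Real.pi^2*3/4 + t^2)) * Real.cos t^3 := by ring
    have e2 : (Real.pi/2-t)^3*(Real.pi/2+t)^3 = (Real.pi^2/4 - t^2)^3 := by ring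
    have c3 : Real.cos t^3 ≤ (1 - t^2/2 + (t^2)^2/24)^3 :=
      pow_le_pow_left₀ hcost.le hcost_ub 3
    have coef0 : (0:ℝ) ≤ 2*t*(Real.pi^2*3/4 + t^2) := by
      apply mul_nonneg (by linarith); nlinarith [sq_nonneg t]
    have lhs1 : (2*t*(Real.pi^2*3/4 + t^2)) * Real.cos t^3
        ≤ (2*t*(Real.pi^2*3/4 + t^2)) * (1 - t^2/2 + (t^2)^2/24)^3 :=
      mul_le_mul_of_nonneg_left c3 coef0
    have lhs2 : (2*t*(Real.pi^2*3/4 + t^2)) * (1 - t^2/2 + (t^2)^2/24)^3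
        ≤ (2*t*(7402220/1000000 + t^2)) * (1 - t^2/2 + (t^2)^2/24)^3 := by
      apply mul_le_mul_of_nonneg_right _ (pow_nonneg hq0 3)
      nlinarith [mul_nonneg ht0.le (by linarith : (0:ℝ) ≤ 7402220/1000000 - Real.pi^2*3/4)]
    have poly : (2*t*(7402220/1000000 + t^2)) * (1 - t^2/2 + (t^2)^2/24)^3
        < (t - t^3/6) * (2467401/1000000 - t^2)^3 := by
      have hD := polyB (t^2) (sq_nonneg t) hu
      calc (2*t*(7402220/1000000 + t^2)) * (1 - t^2/2 + (t^2)^2/24)^3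
          = t * (2*(7402220/1000000 + t^2)*(1 - t^2/2 + (t^2)^2/24)^3) := by ring
        _ < t * ((1 - t^2/6)*(2467401/1000000 - t^2)^3) :=
            mul_lt_mul_of_pos_left hD ht0
        _ = (t - t^3/6) * (2467401/1000000 - t^2)^3 := by ring
    have rhs1 : (t - t^3/6) * (2467401/1000000 - t^2)^3
        ≤ Real.sin t * (Real.pi^2/4 - t^2)^3 :=
      mul_le_mul hsint_lb (pow_le_pow_left₀ (by linarith) (by linarith) 3)
        (pow_nonneg (by linarith) 3) hsint0.le
    rw [e2]
    linarith [e1, lhs1, lhs2, poly, rhs1]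
  have hden : 0 < Real.sin x^3 * (x^3*(Real.pi-x)^3) := by
    apply mul_pos (pow_pos hsin0 3)
    exact mul_pos (pow_pos hx0 3) (pow_pos hxpi0 3)
  have frac : Real.cos x/Real.sin x^3 + 1/(Real.pi-x)^3 - 1/x^3
      = (Real.cos x * (x^3*(Real.pi-x)^3) - ((Real.pi-x)^3 - x^3) * Real.sin x^3)
        / (Real.sin x^3 * (x^3*(Real.pi-x)^3)) := by
    field_simp
    ring
  have hpos := div_pos (by linarith : (0:ℝ) <
    Real.cos x * (x^3*(Real.pi-x)^3) - ((Real.pi-x)^3 - x^3) * Real.sin x^3) hden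
  linarith [frac ▸ hpos]

lemma key (x : ℝ) (hx0 : 0 < x) (hx : x < Real.pi/2) :
    1/x^3 < Real.cos x / Real.sin x^3 + 1/(Real.pi - x)^3 := by
  have hπl := Real.pi_gt_d6
  have hπu := Real.pi_lt_d6
  have hxpi : x < Real.pi := by linarith
  rcases le_or_gt x (9/10) with h9 | h9
  · have hu1 : x^2 ≤ 81/100 := by nlinarith
    have hH := polyA1 (x^2) (sq_nonneg x) hu1
    have hM : 0 < 1 - (x^2)^2/15 - (33/1000)*(x^2)^3 := by
      nlinarith [sq_nonneg x, sq_nonneg (x^2), mul_nonneg (sq_nonneg x) (sq_nonneg (x^2))]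
    have hcds := cds_lb x (33/1000) hx0 hxpi hH hM
    have hnum := numA1 x hx0 h9
    linarith
  rcases le_or_gt x 1 with h1 | h1
  · have hu1 : x^2 ≤ 1 := by nlinarith
    have hH := polyA2 (x^2) (sq_nonneg x) hu1
    have hM : 0 < 1 - (x^2)^2/15 - (31/1000)*(x^2)^3 := by
      nlinarith [sq_nonneg x, sq_nonneg (x^2), mul_nonneg (sq_nonneg x) (sq_nonneg (x^2))]
    have hcds := cds_lb x (31/1000) hx0 hxpi hH hM
    have hnum := numA2 x h9.le h1
    linarith
  · exact caseB x h1.le hx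

end auxiliary


/-- The function `f(x) = (sin x)⁻² + 1 - x⁻² - (π-x)⁻²` on `(0,π)` attains its
minimum precisely at `x = π/2`, with minimum value `2 - 8/π²`. -/
theorem stmt5 (f : ℝ → ℝ)
    (hf : ∀ x, f x = 1 / Real.sin x ^ 2 + 1 - 1 / x ^ 2 - 1 / (Real.pi - x) ^ 2) :
    f (Real.pi / 2) = 2 - 8 / Real.pi ^ 2 ∧
    (∀ x ∈ Ioo (0 : ℝ) Real.pi, f (Real.pi / 2) ≤ f x) ∧
    (∀ x ∈ Ioo (0 : ℝ) Real.pi, x ≠ Real.pi / 2 → f (Real.pi / 2) < f x) := by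
  have hπ := Real.pi_pos
  -- value at π/2
  have hval : f (Real.pi/2) = 2 - 8/Real.pi^2 := by
    rw [hf, show Real.pi - Real.pi/2 = Real.pi/2 by ring, Real.sin_pi_div_two]
    field_simp
    ring
  -- symmetry
  have hsym : ∀ z : ℝ, f (Real.pi - z) = f z := by
    intro z
    rw [hf, hf, Real.sin_pi_sub, show Real.pi - (Real.pi - z) = z by ring]
    ring
  -- continuity on Ioc 0 (π/2)
  have hcont : ContinuousOn f (Ioc 0 (Real.pi/2)) := by
    have c1 : ContinuousOn (fun y : ℝ => 1/Real.sin y^2) (Ioc 0 (Real.pi/2)) := by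
      apply ContinuousOn.div continuousOn_const (Real.continuous_sin.continuousOn.pow 2)
      intro z hz
      exact pow_ne_zero 2 (Real.sin_pos_of_pos_of_lt_pi hz.1 (by linarith [hz.2])).ne'
    have c2 : ContinuousOn (fun y : ℝ => 1/y^2) (Ioc 0 (Real.pi/2)) := by
      apply ContinuousOn.div continuousOn_const (continuous_pow 2).continuousOn
      intro z hz
      exact pow_ne_zero 2 hz.1.ne'
    have c3 : ContinuousOn (fun y : ℝ => 1/(Real.pi - y)^2) (Ioc 0 (Real.pi/2)) := by
      apply ContinuousOn.div continuousOn_const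
        (((continuous_const.sub continuous_id).pow 2).continuousOn)
      intro z hz
      have : (0:ℝ) < Real.pi - z := by linarith [hz.2]
      exact pow_ne_zero 2 this.ne'
    have c4 : ContinuousOn
        (fun y : ℝ => 1/Real.sin y^2 + 1 - 1/y^2 - 1/(Real.pi - y)^2) (Ioc 0 (Real.pi/2)) :=
      ((c1.add continuousOn_const).sub c2).sub c3
    exact c4.congr (fun z _ => hf z)
  -- derivative negative on the interior
  have hderiv : ∀ z ∈ interior (Ioc (0:ℝ) (Real.pi/2)), deriv f z < 0 := by
    rw [interior_Ioc]
    intro z hz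
    have hz0 : 0 < z := hz.1
    have hzlt : z < Real.pi/2 := hz.2
    have hsinz : 0 < Real.sin z := Real.sin_pos_of_pos_of_lt_pi hz0 (by linarith)
    have hpz : (0:ℝ) < Real.pi - z := by linarith
    have h1 : HasDerivAt (fun y : ℝ => 1 / Real.sin y ^ 2)
        (-(2 * Real.sin z * Real.cos z) / (Real.sin z ^ 2) ^ 2) z := by
      have hs : HasDerivAt (fun y : ℝ => Real.sin y ^ 2) (2 * Real.sin z * Real.cos z) z := by
        simpa [Pi.pow_def] using (Real.hasDerivAt_sin z).pow 2
      simpa [one_div, Pi.inv_def] using hs.inv (pow_ne_zero 2 hsinz.ne')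
    have h2 : HasDerivAt (fun y : ℝ => 1 / y ^ 2) (-(2 * z) / (z ^ 2) ^ 2) z := by
      have hs : HasDerivAt (fun y : ℝ => y ^ 2) (2 * z) z := by
        simpa using hasDerivAt_pow 2 z
      simpa [one_div, Pi.inv_def] using hs.inv (pow_ne_zero 2 hz0.ne')
    have h3 : HasDerivAt (fun y : ℝ => 1 / (Real.pi - y) ^ 2)
        (-(2 * (Real.pi - z) * (-1)) / ((Real.pi - z) ^ 2) ^ 2) z := by
      have hin : HasDerivAt (fun y : ℝ => Real.pi - y) (-1) z := by
        simpa [Pi.sub_def] using (hasDerivAt_const z Real.pi).sub (hasDerivAt_id z)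
      have hp : HasDerivAt (fun y : ℝ => (Real.pi - y) ^ 2) (2 * (Real.pi - z) * (-1)) z := by
        simpa [Pi.pow_def] using hin.pow 2
      simpa [one_div, Pi.inv_def] using hp.inv (pow_ne_zero 2 hpz.ne')
    have hG : HasDerivAt (fun y : ℝ => 1 / Real.sin y ^ 2 + 1 - 1 / y ^ 2 - 1 / (Real.pi - y) ^ 2)
        (-(2 * Real.sin z * Real.cos z) / (Real.sin z ^ 2) ^ 2 - -(2 * z) / (z ^ 2) ^ 2
          - -(2 * (Real.pi - z) * (-1)) / ((Real.pi - z) ^ 2) ^ 2) z :=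
      ((h1.add_const 1).sub h2).sub h3
    have hF : HasDerivAt f
        (-(2 * Real.sin z * Real.cos z) / (Real.sin z ^ 2) ^ 2 - -(2 * z) / (z ^ 2) ^ 2
          - -(2 * (Real.pi - z) * (-1)) / ((Real.pi - z) ^ 2) ^ 2) z :=
      hG.congr_of_eventuallyEq (Filter.Eventually.of_forall hf)
    rw [hF.deriv]
    have hk := key z hz0 hzlt
    have e1 : -(2 * Real.sin z * Real.cos z) / (Real.sin z ^ 2) ^ 2
        = -2 * (Real.cos z / Real.sin z ^ 3) := by
      field_simp
    have e2 : -(2 * z) / (z ^ 2) ^ 2 = -2 * (1/z^3) := by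
      field_simp
    have e3 : -(2 * (Real.pi - z) * (-1)) / ((Real.pi - z) ^ 2) ^ 2
        = 2 * (1/(Real.pi - z)^3) := by
      field_simp
    rw [e1, e2, e3]
    linarith
  have hanti : StrictAntiOn f (Ioc (0:ℝ) (Real.pi/2)) :=
    strictAntiOn_of_deriv_neg (convex_Ioc _ _) hcont hderiv
  have hmem : Real.pi/2 ∈ Ioc (0:ℝ) (Real.pi/2) := ⟨by linarith, le_refl _⟩
  have hstrict : ∀ x ∈ Ioo (0:ℝ) Real.pi, x ≠ Real.pi/2 → f (Real.pi/2) < f x := by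
    intro x hx hne
    have hx1 : 0 < x := hx.1
    have hx2 : x < Real.pi := hx.2
    rcases lt_or_gt_of_ne hne with h | h
    · exact hanti ⟨hx1, h.le⟩ hmem h
    · have hy1 : 0 < Real.pi - x := by linarith
      have hy2 : Real.pi - x ≤ Real.pi/2 := by linarith
      have h2 := hanti (mem_Ioc.mpr ⟨hy1, hy2⟩) hmem (by linarith : Real.pi - x < Real.pi/2)
      rwa [hsym x] at h2
  refine ⟨hval, ?_, hstrict⟩
  intro x hx
  by_cases hxe : x = Real.pi/2
  · rw [hxe]
  · exact (hstrict x hx hxe).le
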